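/- For every polytope Q of dimension d ≥ 2 and every edge e of Q, the graph obtained from the vertex-edge graph of Q by deleting the single edge e (keeping all vertices) is connected; that is, the graph of a polytope of dimension at least 2 is 2-edge-connected. -/

import Mathlib

open Set Classical

/-- Points of `ℝ^N`. -/
abbrev Pt (N : ℕ) := EuclideanSpace ℝ (Fin N)

/-- A polytope: the convex hull of a finite set of points. -/
def IsPolytope {N : ℕ} (Q : Set (Pt N)) : Prop :=
  ∃ S : Set (Pt N), S.Finite ∧ Q = convexHull ℝ S

/-- Dimension of a subset of `ℝ^N`: the dimension of its affine span,
with the empty set having dimension `-1`. -/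
noncomputable def faceDim {N : ℕ} (s : Set (Pt N)) : ℤ :=
  if s = ∅ then -1 else (Module.finrank ℝ (affineSpan ℝ s).direction : ℤ)

/-- A face of a polytope: an exposed subset (this includes `∅` and the polytope itself). -/
def IsFaceOf {N : ℕ} (Q F : Set (Pt N)) : Prop :=
  IsExposed ℝ Q F

/-- A `k`-face: a face of dimension `k`. -/
def IsKFaceOf {N : ℕ} (k : ℕ) (Q F : Set (Pt N)) : Prop :=
  IsFaceOf Q F ∧ faceDim F = k

/-- A vertex: a point spanning a `0`-dimensional face. -/
def IsVertexOf {N : ℕ} (Q : Set (Pt N)) (v : Pt N) : Prop :=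
  IsKFaceOf 0 Q {v}

/-- An affine hyperplane: the zero set of a nonconstant affine functional. -/
def IsHyperplane {N : ℕ} (H : Set (Pt N)) : Prop :=
  ∃ f : Pt N →ᵃ[ℝ] ℝ, f.linear ≠ 0 ∧ H = {x | f x = 0}

namespace Helper

variable {N : ℕ}

noncomputable def amax (S : Finset (Pt N)) (l : Pt N →L[ℝ] ℝ) : Finset (Pt N) :=
  S.filter (fun s => ∀ t ∈ S, l t ≤ l s)

lemma mem_amax {S : Finset (Pt N)} {l : Pt N →L[ℝ] ℝ} {s : Pt N} :
    s ∈ amax S l ↔ s ∈ S ∧ ∀ t ∈ S, l t ≤ l s := Finset.mem_filter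

lemma amax_subset {S : Finset (Pt N)} {l : Pt N →L[ℝ] ℝ} : amax S l ⊆ S :=
  Finset.filter_subset _ _

lemma amax_nonempty {S : Finset (Pt N)} (hS : S.Nonempty) (l : Pt N →L[ℝ] ℝ) :
    (amax S l).Nonempty := by
  obtain ⟨b, hb, hmax⟩ := S.exists_max_image (fun s => l s) hS
  exact ⟨b, mem_amax.mpr ⟨hb, hmax⟩⟩

lemma amax_value {S : Finset (Pt N)} {l : Pt N →L[ℝ] ℝ} {s t : Pt N}
    (hs : s ∈ amax S l) (ht : t ∈ amax S l) : l s = l t :=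
  le_antisymm ((mem_amax.1 ht).2 s (mem_amax.1 hs).1) ((mem_amax.1 hs).2 t (mem_amax.1 ht).1)

lemma le_on_convexHull {S : Finset (Pt N)} {l : Pt N →L[ℝ] ℝ} {M : ℝ}
    (h : ∀ s ∈ S, l s ≤ M) {x : Pt N} (hx : x ∈ convexHull ℝ (S : Set (Pt N))) : l x ≤ M := by
  have hsub : convexHull ℝ (S : Set (Pt N)) ⊆ {y | l y ≤ M} :=
    convexHull_min (fun s hs => h s hs) (convex_halfSpace_le ⟨l.map_add, l.map_smul⟩ M)
  exact hsub hx

lemma eq_on_convexHull {S : Finset (Pt N)} {l : Pt N →L[ℝ] ℝ} {M : ℝ}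
    (h : ∀ s ∈ S, l s = M) {x : Pt N} (hx : x ∈ convexHull ℝ (S : Set (Pt N))) : l x = M := by
  have hsub : convexHull ℝ (S : Set (Pt N)) ⊆ {y | l y = M} :=
    convexHull_min (fun s hs => h s hs) (convex_hyperplane ⟨l.map_add, l.map_smul⟩ M)
  exact hsub hx

lemma notmem_amax_lt {S : Finset (Pt N)} {l : Pt N →L[ℝ] ℝ} {b s : Pt N}
    (hb : b ∈ amax S l) (hs : s ∈ S) (hns : s ∉ amax S l) : l s < l b := by
  have : ¬ ∀ t ∈ S, l t ≤ l s := fun h => hns (mem_amax.mpr ⟨hs, h⟩)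
  push_neg at this
  obtain ⟨t, ht, hts⟩ := this
  exact lt_of_lt_of_le hts ((mem_amax.1 hb).2 t ht)

lemma face_eq {S : Finset (Pt N)} (hS : S.Nonempty) (l : Pt N →L[ℝ] ℝ) :
    {x ∈ convexHull ℝ (S : Set (Pt N)) | ∀ y ∈ convexHull ℝ (S : Set (Pt N)), l y ≤ l x}
      = convexHull ℝ ((amax S l : Finset (Pt N)) : Set (Pt N)) := by
  obtain ⟨b, hb⟩ := amax_nonempty hS l
  have hbS : b ∈ S := amax_subset hb
  have hbmax : ∀ t ∈ S, l t ≤ l b := (mem_amax.1 hb).2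
  apply Set.Subset.antisymm
  · rintro x ⟨hxQ, hxmax⟩
    have hxb : l x = l b := le_antisymm (le_on_convexHull hbmax hxQ)
      (hxmax b (subset_convexHull ℝ _ hbS))
    rw [Finset.convexHull_eq] at hxQ ⊢
    obtain ⟨w, hw0, hw1, hwx⟩ := hxQ
    have hlx : ∑ s ∈ S, w s * l s = l b := by
      have := congrArg l (S.centerMass_eq_of_sum_1 id hw1 ▸ hwx)
      rw [← hxb, ← this, map_sum]
      simp [smul_eq_mul]
    have hsum0 : ∑ s ∈ S, w s * (l b - l s) = 0 := by
      have : ∑ s ∈ S, w s * (l b - l s) = (∑ s ∈ S, w s) * l b - ∑ s ∈ S, w s * l s := by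
        rw [Finset.sum_mul, ← Finset.sum_sub_distrib]
        congr 1; ext s; ring
      rw [this, hw1, hlx]; ring
    have hzero : ∀ s ∈ S, s ∉ amax S l → w s = 0 := by
      intro s hsS hns
      have hterm : w s * (l b - l s) = 0 :=
        (Finset.sum_eq_zero_iff_of_nonneg (fun t ht => mul_nonneg (hw0 t ht)
          (sub_nonneg.mpr (hbmax t ht)))).1 hsum0 s hsS
      rcases mul_eq_zero.1 hterm with h | h
      · exact h
      · exact absurd (sub_eq_zero.1 h).symm (ne_of_lt (notmem_amax_lt hb hsS hns))
    refine ⟨w, fun y hy => hw0 y (amax_subset hy), ?_, ?_⟩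
    · rw [Finset.sum_subset amax_subset (fun s hs hns => hzero s hs hns)]
      exact hw1
    · have hsum1 : ∑ y ∈ amax S l, w y = 1 := by
        rw [Finset.sum_subset amax_subset (fun s hs hns => hzero s hs hns)]; exact hw1
      rw [(amax S l).centerMass_eq_of_sum_1 id hsum1, ← hwx,
        S.centerMass_eq_of_sum_1 id hw1]
      exact Finset.sum_subset amax_subset (fun s hs hns => by rw [hzero s hs hns, zero_smul])
  · intro x hx
    have hxQ : x ∈ convexHull ℝ (S : Set (Pt N)) :=
      convexHull_mono (Finset.coe_subset.2 amax_subset) hx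
    have hxb : l x = l b := eq_on_convexHull (fun s hs => amax_value hs hb) hx
    exact ⟨hxQ, fun y hy => hxb ▸ le_on_convexHull hbmax hy⟩

lemma isExposed_amax (S : Finset (Pt N)) (l : Pt N →L[ℝ] ℝ) :
    IsExposed ℝ (convexHull ℝ (S : Set (Pt N)))
      (convexHull ℝ ((amax S l : Finset (Pt N)) : Set (Pt N))) := by
  intro hne
  have hS : S.Nonempty := by
    rw [convexHull_nonempty_iff] at hne
    obtain ⟨x, hx⟩ := hne
    exact ⟨x, amax_subset (by exact_mod_cast hx)⟩
  exact ⟨l, (face_eq hS l).symm⟩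

lemma exposed_eq_amax {S : Finset (Pt N)} {F : Set (Pt N)}
    (hF : IsExposed ℝ (convexHull ℝ (S : Set (Pt N))) F) (hne : F.Nonempty) :
    ∃ l : Pt N →L[ℝ] ℝ, F = convexHull ℝ ((amax S l : Finset (Pt N)) : Set (Pt N)) := by
  obtain ⟨l, hl⟩ := hF hne
  have hS : S.Nonempty := by
    obtain ⟨x, hx⟩ := hne
    have : x ∈ convexHull ℝ (S : Set (Pt N)) := (hl ▸ hx).1
    exact Finset.coe_nonempty.mp (convexHull_nonempty_iff.mp ⟨x, this⟩)
  exact ⟨l, hl.trans (face_eq hS l)⟩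

end Helper

namespace Helper2
open Helper

variable {N : ℕ}

lemma faceDim_of_nonempty {s : Set (Pt N)} (h : s.Nonempty) :
    faceDim s = (Module.finrank ℝ (vectorSpan ℝ s) : ℤ) := by
  rw [faceDim, if_neg h.ne_empty, direction_affineSpan]

lemma faceDim_convexHull (s : Set (Pt N)) : faceDim (convexHull ℝ s) = faceDim s := by
  by_cases h : s = ∅
  · subst h; rw [convexHull_empty]
  · have hne : s.Nonempty := Set.nonempty_iff_ne_empty.mpr h
    rw [faceDim_of_nonempty hne, faceDim_of_nonempty (hne.convexHull),
      ← direction_affineSpan, ← direction_affineSpan, affineSpan_convexHull]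

lemma faceDim_singleton (v : Pt N) : faceDim {v} = 0 := by
  rw [faceDim_of_nonempty (Set.singleton_nonempty v), vectorSpan_singleton]
  simp

lemma isVertexOf_of_exposed_singleton {Q : Set (Pt N)} {v : Pt N}
    (h : IsExposed ℝ Q {v}) : IsVertexOf Q v :=
  ⟨h, by rw [faceDim_singleton]; norm_num⟩

lemma IsVertexOf.mem {Q : Set (Pt N)} {v : Pt N} (h : IsVertexOf Q v) : v ∈ Q :=
  IsExposed.subset h.1 rfl

lemma vertex_mem_finset {S : Finset (Pt N)} {v : Pt N}
    (h : IsVertexOf (convexHull ℝ (S : Set (Pt N))) v) : v ∈ S := by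
  have hext : IsExtreme ℝ (convexHull ℝ (S : Set (Pt N))) {v} := IsExposed.isExtreme h.1
  exact_mod_cast extremePoints_convexHull_subset hext.mem_extremePoints

/-- restriction of an exposed set to an intermediate subset -/
lemma exposed_restrict {Q F B : Set (Pt N)} (hB : IsExposed ℝ Q B) (hBF : B ⊆ F)
    (hFQ : F ⊆ Q) : IsExposed ℝ F B := by
  intro hne
  obtain ⟨l, hl⟩ := hB hne
  obtain ⟨b, hb⟩ := hne
  have hbQ : b ∈ Q ∧ ∀ y ∈ Q, l y ≤ l b := by
    have := hl ▸ hb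
    exact ⟨this.1, this.2⟩
  refine ⟨l, Set.Subset.antisymm ?_ ?_⟩
  · intro x hx
    have hx' : x ∈ Q ∧ ∀ y ∈ Q, l y ≤ l x := by
      have := hl ▸ hx
      exact ⟨this.1, this.2⟩
    exact ⟨hBF hx, fun y hy => hx'.2 y (hFQ hy)⟩
  · rintro x ⟨hxF, hxmax⟩
    have hxb : l x = l b := le_antisymm (hbQ.2 x (hFQ hxF)) (hxmax b (hBF hb))
    rw [hl]
    exact ⟨hFQ hxF, fun y hy => hxb ▸ hbQ.2 y hy⟩

/-- transitivity of exposedness over polytopes -/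
lemma isExposed_trans {S : Finset (Pt N)} {F G : Set (Pt N)}
    (hF : IsExposed ℝ (convexHull ℝ (S : Set (Pt N))) F) (hG : IsExposed ℝ F G) :
    IsExposed ℝ (convexHull ℝ (S : Set (Pt N))) G := by
  intro hGne
  have hFne : F.Nonempty := hGne.mono (IsExposed.subset hG)
  obtain ⟨l, hFeq⟩ := exposed_eq_amax hF hFne
  have hTne : (amax S l).Nonempty :=
    Finset.coe_nonempty.mp (convexHull_nonempty_iff.mp (hFeq ▸ hFne))
  obtain ⟨v₀, hv₀T⟩ := hTne
  have hS : S.Nonempty := ⟨v₀, amax_subset hv₀T⟩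
  obtain ⟨m, hGeq⟩ := hG hGne
  have hGeq2 : G = convexHull ℝ ((amax (amax S l) m : Finset (Pt N)) : Set (Pt N)) := by
    rw [hGeq, hFeq]; exact face_eq (Finset.coe_nonempty.mp (convexHull_nonempty_iff.mp (hFeq ▸ hFne))) m
  have hAmne : (amax (amax S l) m).Nonempty :=
    Finset.coe_nonempty.mp (convexHull_nonempty_iff.mp (hGeq2 ▸ hGne))
  obtain ⟨m₀, hm₀⟩ := hAmne
  have hm₀T : m₀ ∈ amax S l := amax_subset hm₀
  have hm₀S : m₀ ∈ S := amax_subset hm₀T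
  by_cases hTS : amax S l = S
  · refine ⟨m, ?_⟩
    rw [hGeq2, face_eq hS m, hTS]
  · have hSdiff : (S \ amax S l).Nonempty :=
      Finset.sdiff_nonempty.mpr (fun hsub => hTS (Finset.Subset.antisymm amax_subset hsub))
    obtain ⟨s₁, hs₁, hmin⟩ := (S \ amax S l).exists_min_image (fun s => l v₀ - l s) hSdiff
    have hs₁S : s₁ ∈ S := (Finset.mem_sdiff.1 hs₁).1
    have hs₁T : s₁ ∉ amax S l := (Finset.mem_sdiff.1 hs₁).2
    set δ := l v₀ - l s₁ with hδdef
    have hδpos : 0 < δ := sub_pos.mpr (notmem_amax_lt hv₀T hs₁S hs₁T)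
    have hδ : ∀ s ∈ S, s ∉ amax S l → l s ≤ l v₀ - δ := by
      intro s hs hns
      have := hmin s (Finset.mem_sdiff.mpr ⟨hs, hns⟩)
      simp only [hδdef] at this ⊢
      linarith
    obtain ⟨rpt, hrS, hr⟩ := S.exists_max_image (fun s => m s) hS
    set ε := δ / (m rpt - m m₀ + 1) with hεdef
    have hden : 0 < m rpt - m m₀ + 1 := by
      have : m m₀ ≤ m rpt := hr m₀ hm₀S
      linarith
    have hεpos : 0 < ε := div_pos hδpos hden
    have hkey : ∀ s ∈ S, s ∉ amax S l → l s + ε * m s < l v₀ + ε * m m₀ := by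
      intro s hs hns
      have h1 : l s ≤ l v₀ - δ := hδ s hs hns
      have h2 : m s ≤ m rpt := hr s hs
      have h3 : ε * (m rpt - m m₀ + 1) = δ := div_mul_cancel₀ _ (ne_of_gt hden)
      nlinarith
    set h : Pt N →L[ℝ] ℝ := l + ε • m with hh
    have happ : ∀ x, h x = l x + ε * m x := fun x => rfl
    have hamaxeq : amax S h = amax (amax S l) m := by
      apply Finset.ext; intro s
      constructor
      · intro hs
        have hsS : s ∈ S := amax_subset hs
        have hsmax : ∀ t ∈ S, h t ≤ h s := (mem_amax.1 hs).2
        have hlm₀ : l m₀ = l v₀ := amax_value hm₀T hv₀T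
        have hge : l v₀ + ε * m m₀ ≤ l s + ε * m s := by
          have := hsmax m₀ hm₀S
          rw [happ, happ, hlm₀] at this
          exact this
        have hsT : s ∈ amax S l := by
          by_contra hns
          have := hkey s hsS hns
          linarith
        have hls : l s = l v₀ := amax_value hsT hv₀T
        have hms : m m₀ ≤ m s := by
          rw [hls] at hge
          nlinarith
        exact mem_amax.mpr ⟨hsT, fun t ht => le_trans ((mem_amax.1 hm₀).2 t ht) hms⟩
      · intro hs
        have hsT : s ∈ amax S l := amax_subset hs
        have hsS : s ∈ S := amax_subset hsT
        have hms : m s = m m₀ := amax_value hs hm₀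
        have hls : l s = l v₀ := amax_value hsT hv₀T
        refine mem_amax.mpr ⟨hsS, fun t ht => ?_⟩
        by_cases htT : t ∈ amax S l
        · have hlt : l t = l v₀ := amax_value htT hv₀T
          have hmt : m t ≤ m m₀ := (mem_amax.1 hm₀).2 t htT
          rw [happ, happ, hls, hlt, hms]
          nlinarith
        · have := hkey t ht htT
          rw [happ, happ, hls, hms]
          linarith
    refine ⟨h, ?_⟩
    rw [hGeq2, face_eq hS h, hamaxeq]

end Helper2

namespace Helper3
open Helper Helper2

variable {N : ℕ}

lemma IsVertexOf.restrict {Q F : Set (Pt N)} {v : Pt N} (hv : IsVertexOf Q v)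
    (hvF : v ∈ F) (hFQ : F ⊆ Q) : IsVertexOf F v :=
  isVertexOf_of_exposed_singleton (exposed_restrict hv.1 (Set.singleton_subset_iff.mpr hvF) hFQ)

lemma vertex_strict {S : Finset (Pt N)} {v : Pt N}
    (hv : IsVertexOf (convexHull ℝ (S : Set (Pt N))) v) :
    ∃ g : Pt N →L[ℝ] ℝ, ∀ s ∈ S, s ≠ v → g s < g v := by
  obtain ⟨g, hg⟩ := hv.1 (Set.singleton_nonempty v)
  have hvmem : v ∈ convexHull ℝ (S : Set (Pt N)) ∧
      ∀ y ∈ convexHull ℝ (S : Set (Pt N)), g y ≤ g v := by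
    have : v ∈ ({v} : Set (Pt N)) := rfl
    rw [hg] at this
    exact ⟨this.1, this.2⟩
  refine ⟨g, fun s hs hsv => ?_⟩
  have hsQ : s ∈ convexHull ℝ (S : Set (Pt N)) := subset_convexHull ℝ _ hs
  rcases lt_or_eq_of_le (hvmem.2 s hsQ) with h | h
  · exact h
  · exfalso
    apply hsv
    have hmem : s ∈ ({v} : Set (Pt N)) := by
      rw [hg]
      exact ⟨hsQ, fun y hy => h ▸ hvmem.2 y hy⟩
    exact hmem

lemma step {S : Finset (Pt N)} {v : Pt N} (g l : Pt N →L[ℝ] ℝ)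
    (hv : v ∈ S) (hgs : ∀ s ∈ S, s ≠ v → g s < g v)
    (hl : ∃ s ∈ S, l v < l s) :
    ∃ t₀ : ℝ, 0 < t₀ ∧ v ∈ amax S (g + t₀ • l) ∧
      (∃ s ∈ amax S (g + t₀ • l), l v < l s) ∧
      (∀ s ∈ amax S (g + t₀ • l), g v - g s = t₀ * (l s - l v)) := by
  classical
  set A := S.filter (fun s => l v < l s) with hA
  have hAne : A.Nonempty := by
    obtain ⟨s, hs, hls⟩ := hl
    exact ⟨s, Finset.mem_filter.mpr ⟨hs, hls⟩⟩
  obtain ⟨s₀, hs₀A, hmin⟩ := A.exists_min_image (fun s => (g v - g s) / (l s - l v)) hAne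
  have hs₀S : s₀ ∈ S := (Finset.mem_filter.1 hs₀A).1
  have hs₀l : l v < l s₀ := (Finset.mem_filter.1 hs₀A).2
  have hs₀v : s₀ ≠ v := fun h => absurd (h ▸ hs₀l) (lt_irrefl _)
  set t₀ := (g v - g s₀) / (l s₀ - l v) with ht₀
  have ht₀pos : 0 < t₀ :=
    div_pos (sub_pos.mpr (hgs s₀ hs₀S hs₀v)) (sub_pos.mpr hs₀l)
  have happ : ∀ x, (g + t₀ • l) x = g x + t₀ * l x := fun x => rfl
  have hmaxv : ∀ s ∈ S, (g + t₀ • l) s ≤ (g + t₀ • l) v := by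
    intro s hs
    rw [happ, happ]
    by_cases hls : l v < l s
    · have hsA : s ∈ A := Finset.mem_filter.mpr ⟨hs, hls⟩
      have hrat := hmin s hsA
      have hpos : 0 < l s - l v := sub_pos.mpr hls
      have : t₀ * (l s - l v) ≤ g v - g s := (le_div_iff₀ hpos).1 hrat
      linarith
    · push_neg at hls
      have hgsv : g s ≤ g v := by
        rcases eq_or_ne s v with rfl | h
        · exact le_refl _
        · exact (hgs s hs h).le
      nlinarith
  have hvmem : v ∈ amax S (g + t₀ • l) := mem_amax.mpr ⟨hv, hmaxv⟩
  have heqval : ∀ s ∈ amax S (g + t₀ • l), g v - g s = t₀ * (l s - l v) := by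
    intro s hs
    have h1 : (g + t₀ • l) s = (g + t₀ • l) v := amax_value hs hvmem
    rw [happ, happ] at h1
    linarith
  have hs₀eq : t₀ * (l s₀ - l v) = g v - g s₀ :=
    div_mul_cancel₀ _ (ne_of_gt (sub_pos.mpr hs₀l))
  have hs₀mem : s₀ ∈ amax S (g + t₀ • l) := by
    refine mem_amax.mpr ⟨hs₀S, fun t ht => ?_⟩
    have hval : (g + t₀ • l) s₀ = (g + t₀ • l) v := by
      rw [happ, happ]
      linarith
    rw [hval]
    exact hmaxv t ht
  exact ⟨t₀, ht₀pos, hvmem, ⟨s₀, hs₀mem, hs₀l⟩, heqval⟩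

lemma line_case {T : Finset (Pt N)} {v s₀ : Pt N} (hv : v ∈ T) (hs₀ : s₀ ∈ T) (hne : s₀ ≠ v)
    (hline : ∀ t ∈ T, ∃ c : ℝ, t - v = c • (s₀ - v)) :
    ∃ b ∈ T, b ≠ v ∧ IsVertexOf (convexHull ℝ (T : Set (Pt N))) b ∧
      faceDim (convexHull ℝ (T : Set (Pt N))) = 1 := by
  classical
  set u : Pt N := s₀ - v with hu
  have hd : u ≠ 0 := sub_ne_zero.mpr hne
  set l : Pt N →L[ℝ] ℝ := innerSL ℝ u with hldef
  have happ : ∀ x, l x = inner ℝ u x := fun x => rfl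
  have hcoef : ∀ t ∈ T, ∃ c : ℝ, t - v = c • u ∧ l t = l v + c * ‖u‖ ^ 2 := by
    intro t ht
    obtain ⟨c, hc⟩ := hline t ht
    refine ⟨c, hc, ?_⟩
    have : l t - l v = inner ℝ u (t - v) := by
      rw [happ, happ, inner_sub_right]
    rw [hc, real_inner_smul_right, real_inner_self_eq_norm_sq] at this
    linarith
  obtain ⟨b, hbmem⟩ := amax_nonempty ⟨v, hv⟩ l
  have hbT : b ∈ T := amax_subset hbmem
  have hs₀val : l s₀ = l v + ‖u‖ ^ 2 := by
    have : l s₀ - l v = inner ℝ u (s₀ - v) := by rw [happ, happ, inner_sub_right]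
    rw [← hu, real_inner_self_eq_norm_sq] at this
    linarith
  have hnorm : (0:ℝ) < ‖u‖ ^ 2 := by
    have := norm_pos_iff.mpr hd
    positivity
  have hbv : b ≠ v := by
    intro h
    have := (mem_amax.1 hbmem).2 s₀ hs₀
    rw [h, hs₀val] at this
    linarith
  have hsingle : amax T l = {b} := by
    apply Finset.eq_singleton_iff_unique_mem.mpr
    refine ⟨hbmem, fun s hs => ?_⟩
    obtain ⟨cs, hcs, hvals⟩ := hcoef s (amax_subset hs)
    obtain ⟨cb, hcb, hvalb⟩ := hcoef b hbT
    have hval : l s = l b := amax_value hs hbmem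
    have hc : cs = cb := by
      rw [hvals, hvalb] at hval
      have := mul_right_cancel₀ (ne_of_gt hnorm) (by linarith : cs * ‖u‖ ^ 2 = cb * ‖u‖ ^ 2)
      exact this
    have h2 : s - v = b - v := by rw [hcs, hcb, hc]
    exact sub_left_inj.mp h2
  have hexp : IsExposed ℝ (convexHull ℝ (T : Set (Pt N))) {b} := by
    have := isExposed_amax T l
    rw [hsingle] at this
    simpa using this
  have hdim : faceDim (convexHull ℝ (T : Set (Pt N))) = 1 := by
    have hspan : vectorSpan ℝ (T : Set (Pt N)) = Submodule.span ℝ {u} := by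
      apply le_antisymm
      · rw [vectorSpan_def]
        rw [Submodule.span_le]
        rintro x hx
        rw [Set.mem_vsub] at hx
        obtain ⟨a, ha, c, hc, rfl⟩ := hx
        obtain ⟨ca, hca, _⟩ := hcoef a ha
        obtain ⟨cc, hcc, _⟩ := hcoef c hc
        have : a -ᵥ c = (ca - cc) • u := by
          rw [vsub_eq_sub]
          have : a - c = (a - v) - (c - v) := by abel
          rw [this, hca, hcc, sub_smul]
        rw [this]
        exact Submodule.smul_mem _ _ (Submodule.mem_span_singleton_self u)
      · rw [Submodule.span_le, Set.singleton_subset_iff]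
        have : s₀ -ᵥ v ∈ vectorSpan ℝ (T : Set (Pt N)) :=
          vsub_mem_vectorSpan ℝ (Finset.mem_coe.mpr hs₀) (Finset.mem_coe.mpr hv)
        simpa [vsub_eq_sub, ← hu] using this
    rw [faceDim_convexHull, faceDim_of_nonempty ⟨v, Finset.mem_coe.mpr hv⟩, hspan]
    rw [show Submodule.span ℝ {u} = ℝ ∙ u from rfl, finrank_span_singleton hd]
    norm_num
  exact ⟨b, hbT, hbv, isVertexOf_of_exposed_singleton hexp, hdim⟩

end Helper3

namespace Helper4
open Helper Helper2 Helper3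

variable {N : ℕ}

/-- From a non-maximizing vertex there is an edge going strictly up. -/
lemma climb : ∀ (n : ℕ) (S : Finset (Pt N)), S.card ≤ n →
    ∀ (l : Pt N →L[ℝ] ℝ) (v : Pt N), IsVertexOf (convexHull ℝ (S : Set (Pt N))) v →
    (∃ s ∈ S, l v < l s) →
    ∃ (ε : Set (Pt N)) (w : Pt N), IsKFaceOf 1 (convexHull ℝ (S : Set (Pt N))) ε ∧ v ∈ ε ∧
      w ∈ ε ∧ IsVertexOf (convexHull ℝ (S : Set (Pt N))) w ∧ l v < l w := by
  intro n
  induction n with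
  | zero =>
    intro S hcard l v hv hl
    obtain ⟨s, hs, _⟩ := hl
    rw [Finset.card_eq_zero.mp (Nat.le_zero.mp hcard)] at hs
    exact absurd hs (Finset.notMem_empty s)
  | succ n ih =>
    intro S hcard l v hv hl
    have hvS : v ∈ S := vertex_mem_finset hv
    obtain ⟨g, hgs⟩ := vertex_strict hv
    obtain ⟨t₀, ht₀, hvT, ⟨s₀', hs₀'T, hs₀'l⟩, heqval⟩ := step g l hvS hgs hl
    -- the lifted recursion, used in both non-degenerate branches
    have lift : ∀ (T : Finset (Pt N)) (h' : Pt N →L[ℝ] ℝ), T = amax S h' → T ≠ S → v ∈ T →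
        (∃ s ∈ T, l v < l s) →
        ∃ (ε : Set (Pt N)) (w : Pt N), IsKFaceOf 1 (convexHull ℝ (S : Set (Pt N))) ε ∧ v ∈ ε ∧
          w ∈ ε ∧ IsVertexOf (convexHull ℝ (S : Set (Pt N))) w ∧ l v < l w := by
      intro T h' hTdef hTS hvT' hlT
      have hTsub : T ⊆ S := hTdef ▸ amax_subset
      have hssub : T ⊂ S := Finset.ssubset_iff_subset_ne.mpr ⟨hTsub, hTS⟩
      have hcard' : T.card ≤ n := Nat.lt_succ_iff.mp (lt_of_lt_of_le (Finset.card_lt_card hssub) hcard)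
      have hexpT : IsExposed ℝ (convexHull ℝ (S : Set (Pt N))) (convexHull ℝ (T : Set (Pt N))) := by
        rw [hTdef]; exact isExposed_amax S h'
      have hsubQ : convexHull ℝ (T : Set (Pt N)) ⊆ convexHull ℝ (S : Set (Pt N)) :=
        convexHull_mono (Finset.coe_subset.2 hTsub)
      have hvconvT : v ∈ convexHull ℝ (T : Set (Pt N)) :=
        subset_convexHull ℝ _ (Finset.mem_coe.mpr hvT')
      have hvvertT : IsVertexOf (convexHull ℝ (T : Set (Pt N))) v :=
        IsVertexOf.restrict hv hvconvT hsubQ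
      obtain ⟨ε, w, hεface, hvε, hwε, hwvert, hlw⟩ := ih T hcard' l v hvvertT hlT
      refine ⟨ε, w, ⟨isExposed_trans hexpT hεface.1, hεface.2⟩, hvε, hwε, ?_, hlw⟩
      exact isVertexOf_of_exposed_singleton (isExposed_trans hexpT hwvert.1)
    by_cases hTS : amax S (g + t₀ • l) = S
    · -- degenerate case: every other generator is strictly above v
      have hall : ∀ s ∈ S, s ≠ v → l v < l s := by
        intro s hs hsv
        have h1 := heqval s (by rw [hTS]; exact hs)
        have h2 := hgs s hs hsv
        nlinarith
      obtain ⟨s₀, hs₀S, hs₀l⟩ := hl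
      have hs₀v : s₀ ≠ v := fun h => absurd (h ▸ hs₀l) (lt_irrefl _)
      by_cases hline : ∀ t ∈ S, ∃ c : ℝ, t - v = c • (s₀ - v)
      · obtain ⟨b, hbS, hbv, hbvert, hdim⟩ := line_case hvS hs₀S hs₀v hline
        refine ⟨convexHull ℝ (S : Set (Pt N)), b,
          ⟨IsExposed.refl _, by rw [hdim]; norm_num⟩,
          IsVertexOf.mem hv, IsVertexOf.mem hbvert, hbvert, hall b hbS hbv⟩
      · push_neg at hline
        obtain ⟨t, htS, htc⟩ := hline
        set d : Pt N := s₀ - v with hd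
        have hd0 : d ≠ 0 := sub_ne_zero.mpr hs₀v
        set u : Pt N := (t - v) - ((inner ℝ d (t - v) : ℝ) / ‖d‖ ^ 2) • d with hu
        have hdn : (0:ℝ) < ‖d‖ ^ 2 := by
          have := norm_pos_iff.mpr hd0
          positivity
        have hud : (inner ℝ u d : ℝ) = 0 := by
          rw [hu, inner_sub_left, real_inner_smul_left]
          rw [real_inner_comm d (t - v)] at *
          field_simp [real_inner_self_eq_norm_sq]
          rw [real_inner_self_eq_norm_sq]; ring
        have hu0 : u ≠ 0 := by
          intro h
          apply htc ((inner ℝ d (t - v) : ℝ) / ‖d‖ ^ 2)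
          have : t - v - ((inner ℝ d (t - v) : ℝ) / ‖d‖ ^ 2) • d = 0 := by rw [← hu, h]
          linear_combination (norm := module) this
        have hut : (inner ℝ u (t - v) : ℝ) = ‖u‖ ^ 2 := by
          have hdecomp : t - v = u + ((inner ℝ d (t - v) : ℝ) / ‖d‖ ^ 2) • d := by
            rw [hu]; abel
          rw [hdecomp, inner_add_right, real_inner_smul_right, hud,
            real_inner_self_eq_norm_sq]
          ring
        set l' : Pt N →L[ℝ] ℝ := innerSL ℝ u with hl'def
        have happ' : ∀ x, l' x = (inner ℝ u x : ℝ) := fun x => rfl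
        have hupos : (0:ℝ) < ‖u‖ ^ 2 := by
          have := norm_pos_iff.mpr hu0
          positivity
        have hl' : ∃ s ∈ S, l' v < l' s := by
          refine ⟨t, htS, ?_⟩
          have : l' t - l' v = (inner ℝ u (t - v) : ℝ) := by
            rw [happ', happ', inner_sub_right]
          rw [hut] at this
          linarith
        obtain ⟨t₁, ht₁, hvT', ⟨s', hs'T', hs'l'⟩, heqval'⟩ := step g l' hvS hgs hl'
        have hT'S : amax S (g + t₁ • l') ≠ S := by
          intro hEq
          have h1 := heqval' s₀ (by rw [hEq]; exact hs₀S)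
          have h2 : l' s₀ - l' v = (inner ℝ u d : ℝ) := by
            rw [happ', happ', ← inner_sub_right, ← hd]
          rw [h2, hud, mul_zero] at h1
          have := hgs s₀ hs₀S hs₀v
          linarith
        have hs'v : s' ≠ v := fun h => absurd (h ▸ hs'l') (lt_irrefl _)
        exact lift (amax S (g + t₁ • l')) (g + t₁ • l') rfl hT'S hvT'
          ⟨s', hs'T', hall s' (amax_subset hs'T') hs'v⟩
    · exact lift (amax S (g + t₀ • l)) (g + t₀ • l) rfl hTS hvT ⟨s₀', hs₀'T, hs₀'l⟩

end Helper4

open Helper Helper2 Helper3 Helper4 in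
/-- The vertex-edge graph of a polytope of dimension at least
`2` remains connected after deleting any single edge. -/
theorem polytope_graph_two_edge_connected {N d : ℕ} (Q e : Set (Pt N))
    (hQ : IsPolytope Q) (hd : faceDim Q = d) (hd2 : 2 ≤ d)
    (he : IsKFaceOf 1 Q e) :
    (SimpleGraph.fromRel (fun x y : {v : Pt N // IsVertexOf Q v} =>
      ∃ ε : Set (Pt N), IsKFaceOf 1 Q ε ∧ ε ≠ e ∧ (x : Pt N) ∈ ε ∧ (y : Pt N) ∈ ε)).Connected := by
  classical
  obtain ⟨S₀, hS₀fin, rfl⟩ := hQ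
  set S : Finset (Pt N) := hS₀fin.toFinset with hSdef
  have hSS : (S : Set (Pt N)) = S₀ := Set.Finite.coe_toFinset _
  rw [← hSS] at hd he ⊢
  set Q' : Set (Pt N) := convexHull ℝ (S : Set (Pt N)) with hQ'def
  -- nonemptiness and dimension
  have hQne : Q'.Nonempty := by
    rcases Set.eq_empty_or_nonempty Q' with h | h
    · exfalso
      rw [faceDim, if_pos h] at hd
      omega
    · exact h
  have hS : S.Nonempty := Finset.coe_nonempty.mp (convexHull_nonempty_iff.mp hQne)
  have hdS : Module.finrank ℝ (vectorSpan ℝ (S : Set (Pt N))) = d := by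
    have h1 : faceDim Q' = faceDim (S : Set (Pt N)) := faceDim_convexHull _
    rw [h1, faceDim_of_nonempty (Finset.coe_nonempty.mpr hS)] at hd
    exact_mod_cast hd
  -- edge e
  have hene : e.Nonempty := by
    rcases Set.eq_empty_or_nonempty e with h | h
    · exfalso
      have := he.2
      rw [faceDim, if_pos h] at this
      omega
    · exact h
  obtain ⟨le, heeq⟩ := exposed_eq_amax he.1 hene
  set Te : Finset (Pt N) := amax S le with hTedef
  have hTene : Te.Nonempty := Finset.coe_nonempty.mp (convexHull_nonempty_iff.mp (heeq ▸ hene))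
  obtain ⟨a₀, ha₀⟩ := hTene
  have hdTe : Module.finrank ℝ (vectorSpan ℝ (Te : Set (Pt N))) = 1 := by
    have h1 := he.2
    rw [heeq, faceDim_convexHull, faceDim_of_nonempty (Finset.coe_nonempty.mpr ⟨a₀, ha₀⟩)] at h1
    exact_mod_cast h1
  -- e is a segment direction
  obtain ⟨s₀, hs₀Te, hs₀ne⟩ : ∃ s₀ ∈ Te, s₀ ≠ a₀ := by
    by_contra hcon
    push_neg at hcon
    have : (Te : Set (Pt N)) = {a₀} := by
      apply Set.Subset.antisymm
      · intro t ht
        rcases eq_or_ne t a₀ with rfl | h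
        · rfl
        · exact absurd h (by simpa using hcon t (by exact_mod_cast ht))
      · intro t ht
        rw [ht]
        exact_mod_cast ha₀
    rw [this, vectorSpan_singleton] at hdTe
    simp at hdTe
  set dvec : Pt N := s₀ - a₀ with hdvec
  have hdvec0 : dvec ≠ 0 := sub_ne_zero.mpr hs₀ne
  have hspanTe : vectorSpan ℝ (Te : Set (Pt N)) = ℝ ∙ dvec := by
    symm
    apply Submodule.eq_of_le_of_finrank_le
    · rw [Submodule.span_singleton_le_iff_mem]
      have := vsub_mem_vectorSpan ℝ (Finset.mem_coe.mpr hs₀Te) (Finset.mem_coe.mpr ha₀)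
      simpa [vsub_eq_sub] using this
    · rw [hdTe, finrank_span_singleton hdvec0]
  have hline : ∀ t ∈ Te, ∃ c : ℝ, t - a₀ = c • dvec := by
    intro t ht
    have : t -ᵥ a₀ ∈ vectorSpan ℝ (Te : Set (Pt N)) :=
      vsub_mem_vectorSpan ℝ (Finset.mem_coe.mpr ht) (Finset.mem_coe.mpr ha₀)
    rw [hspanTe, Submodule.mem_span_singleton] at this
    obtain ⟨c, hc⟩ := this
    refine ⟨c, ?_⟩
    rw [show t - a₀ = t -ᵥ a₀ from rfl, ← hc]
  -- a vertex of Q exists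
  have heexp : IsExposed ℝ Q' (convexHull ℝ (Te : Set (Pt N))) := heeq ▸ he.1
  obtain ⟨b₀, hb₀Te, hb₀ne, hb₀vert, _⟩ := line_case ha₀ hs₀Te hs₀ne hline
  have hb₀Q : IsVertexOf Q' b₀ :=
    isVertexOf_of_exposed_singleton (isExposed_trans heexp hb₀vert.1)
  -- choose the cutting functional: constant on e, not maximized on e
  obtain ⟨u, hud, s₁, hs₁S, hs₁pos⟩ :
      ∃ u : Pt N, (inner ℝ u dvec : ℝ) = 0 ∧ ∃ s₁ ∈ S, 0 < (inner ℝ u (s₁ - a₀) : ℝ) := by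
    by_cases hex : ∃ u : Pt N, (inner ℝ u dvec : ℝ) = 0 ∧ ∃ s₁ ∈ S, (inner ℝ u (s₁ - a₀) : ℝ) ≠ 0
    · obtain ⟨u, hud, s₁, hs₁S, hs₁⟩ := hex
      rcases lt_or_gt_of_ne hs₁ with h | h
      · exact ⟨-u, by rw [inner_neg_left, hud, neg_zero], s₁, hs₁S,
          by rw [inner_neg_left]; linarith⟩
      · exact ⟨u, hud, s₁, hs₁S, h⟩
    · exfalso
      push_neg at hex
      have hkey : ∀ s ∈ S, s - a₀ ∈ (ℝ ∙ dvec) := by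
        intro s hs
        rw [← Submodule.orthogonal_orthogonal (ℝ ∙ dvec)]
        rw [Submodule.mem_orthogonal]
        intro w hw
        have hwd : (inner ℝ w dvec : ℝ) = 0 := by
          have := (Submodule.mem_orthogonal _ w).mp hw dvec (Submodule.mem_span_singleton_self dvec)
          rwa [real_inner_comm] at this
        exact hex w hwd s hs
      have hle : vectorSpan ℝ (S : Set (Pt N)) ≤ ℝ ∙ dvec := by
        rw [vectorSpan_def, Submodule.span_le]
        rintro x hx
        rw [Set.mem_vsub] at hx
        obtain ⟨p, hp, q, hq, rfl⟩ := hx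
        have h1 := hkey p (by exact_mod_cast hp)
        have h2 := hkey q (by exact_mod_cast hq)
        have : p -ᵥ q = (p - a₀) - (q - a₀) := by rw [vsub_eq_sub]; abel
        rw [this]
        exact Submodule.sub_mem _ h1 h2
      have := Submodule.finrank_mono hle
      rw [hdS, finrank_span_singleton hdvec0] at this
      omega
  set l : Pt N →L[ℝ] ℝ := innerSL ℝ u with hldef
  have happ : ∀ x, l x = (inner ℝ u x : ℝ) := fun x => rfl
  have hconstTe : ∀ t ∈ Te, l t = l a₀ := by
    intro t ht
    obtain ⟨c, hc⟩ := hline t ht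
    have : l t - l a₀ = (inner ℝ u (t - a₀) : ℝ) := by rw [happ, happ, inner_sub_right]
    rw [hc, real_inner_smul_right, hud, mul_zero] at this
    linarith
  have hconste : ∀ z ∈ e, l z = l a₀ := by
    intro z hz
    exact eq_on_convexHull hconstTe (heeq ▸ hz)
  have hstrict : ∃ s ∈ S, l a₀ < l s := by
    refine ⟨s₁, hs₁S, ?_⟩
    have : l s₁ - l a₀ = (inner ℝ u (s₁ - a₀) : ℝ) := by rw [happ, happ, inner_sub_right]
    linarith
  -- the maximal face
  set Tm : Finset (Pt N) := amax S l with hTmdef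
  obtain ⟨m₀, hm₀⟩ := amax_nonempty hS l
  have hm₀Tm : m₀ ∈ Tm := hm₀
  have hFmexp : IsExposed ℝ Q' (convexHull ℝ (Tm : Set (Pt N))) := isExposed_amax S l
  have hMgt : l a₀ < l m₀ := by
    obtain ⟨s, hsS, hsl⟩ := hstrict
    exact lt_of_lt_of_le hsl ((mem_amax.1 hm₀).2 s hsS)
  have hFmval : ∀ x ∈ convexHull ℝ (Tm : Set (Pt N)), l x = l m₀ :=
    fun x hx => eq_on_convexHull (fun s hs => amax_value hs hm₀) hx
  have ha₀e : a₀ ∈ e := heeq ▸ subset_convexHull ℝ _ (Finset.mem_coe.mpr ha₀)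
  have hnsub : ¬ e ⊆ convexHull ℝ (Tm : Set (Pt N)) := by
    intro hsub
    have := hFmval a₀ (hsub ha₀e)
    linarith
  -- notation for the graph
  set V := {v : Pt N // IsVertexOf Q' v} with hV
  set G := (SimpleGraph.fromRel (fun x y : V =>
      ∃ ε : Set (Pt N), IsKFaceOf 1 Q' ε ∧ ε ≠ e ∧ (x : Pt N) ∈ ε ∧ (y : Pt N) ∈ ε)) with hG
  have hadj : ∀ (x y : V), (x : Pt N) ≠ (y : Pt N) →
      (∃ ε : Set (Pt N), IsKFaceOf 1 Q' ε ∧ ε ≠ e ∧ (x : Pt N) ∈ ε ∧ (y : Pt N) ∈ ε) →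
      G.Adj x y := by
    intro x y hne hrel
    rw [hG, SimpleGraph.fromRel_adj]
    exact ⟨fun h => hne (congrArg Subtype.val h), Or.inl hrel⟩
  -- every vertex walks up to the maximal face
  have reach : ∀ (k : ℕ) (x : V), (S.filter (fun s => l (x : Pt N) < l s)).card ≤ k →
      ∃ p : V, (p : Pt N) ∈ convexHull ℝ (Tm : Set (Pt N)) ∧ G.Reachable x p := by
    intro k
    induction k with
    | zero =>
      intro x hcard
      have hnoex : ¬ ∃ s ∈ S, l (x : Pt N) < l s := by
        intro ⟨s, hs, hls⟩
        have : s ∈ S.filter (fun s => l (x : Pt N) < l s) := Finset.mem_filter.mpr ⟨hs, hls⟩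
        have := Finset.card_pos.mpr ⟨s, this⟩
        omega
      push_neg at hnoex
      have hxTm : (x : Pt N) ∈ Tm := mem_amax.mpr ⟨vertex_mem_finset x.2, hnoex⟩
      exact ⟨x, subset_convexHull ℝ _ (Finset.mem_coe.mpr hxTm), SimpleGraph.Reachable.refl x⟩
    | succ k ih =>
      intro x hcard
      by_cases hex : ∃ s ∈ S, l (x : Pt N) < l s
      · obtain ⟨ε, w, hεface, hxε, hwε, hwvert, hlw⟩ :=
          climb S.card S le_rfl l (x : Pt N) x.2 hex
        have hεne : ε ≠ e := by
          intro hεe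
          subst hεe
          have h1 := hconste _ hxε
          have h2 := hconste _ hwε
          linarith
        have hxw : (x : Pt N) ≠ w := fun h => absurd (h ▸ hlw) (lt_irrefl _)
        have hadjxw : G.Adj x ⟨w, hwvert⟩ := hadj x ⟨w, hwvert⟩ hxw ⟨ε, hεface, hεne, hxε, hwε⟩
        have hwS : w ∈ S := vertex_mem_finset hwvert
        have hcard' : (S.filter (fun s => l w < l s)).card ≤ k := by
          have hssub : S.filter (fun s => l w < l s) ⊂ S.filter (fun s => l (x : Pt N) < l s) := by
            rw [Finset.ssubset_iff_subset_ne]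
            constructor
            · intro s hs
              obtain ⟨hsS, hls⟩ := Finset.mem_filter.1 hs
              exact Finset.mem_filter.mpr ⟨hsS, lt_trans hlw hls⟩
            · intro hEq
              have hw1 : w ∈ S.filter (fun s => l (x : Pt N) < l s) :=
                Finset.mem_filter.mpr ⟨hwS, hlw⟩
              rw [← hEq] at hw1
              have := (Finset.mem_filter.1 hw1).2
              exact absurd this (lt_irrefl _)
          have := Finset.card_lt_card hssub
          omega
        obtain ⟨p, hpFm, hreach⟩ := ih ⟨w, hwvert⟩ hcard'
        exact ⟨p, hpFm, hadjxw.reachable.trans hreach⟩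
      · push_neg at hex
        have hxTm : (x : Pt N) ∈ Tm := mem_amax.mpr ⟨vertex_mem_finset x.2, hex⟩
        exact ⟨x, subset_convexHull ℝ _ (Finset.mem_coe.mpr hxTm), SimpleGraph.Reachable.refl x⟩
  -- connectivity inside the maximal face
  have connFm : ∀ p q : V, (p : Pt N) ∈ convexHull ℝ (Tm : Set (Pt N)) →
      (q : Pt N) ∈ convexHull ℝ (Tm : Set (Pt N)) → G.Reachable p q := by
    intro p q hpFm hqFm
    have hFmQ : convexHull ℝ (Tm : Set (Pt N)) ⊆ Q' := IsExposed.subset hFmexp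
    have hqFmv : IsVertexOf (convexHull ℝ (Tm : Set (Pt N))) (q : Pt N) :=
      IsVertexOf.restrict q.2 hqFm hFmQ
    have hqTm : (q : Pt N) ∈ Tm := vertex_mem_finset hqFmv
    obtain ⟨m, hm⟩ := vertex_strict hqFmv
    suffices H : ∀ (k : ℕ) (p' : V), (p' : Pt N) ∈ convexHull ℝ (Tm : Set (Pt N)) →
        (Tm.filter (fun s => m (p' : Pt N) < m s)).card ≤ k → G.Reachable p' q by
      exact H _ p hpFm le_rfl
    intro k
    induction k with
    | zero =>
      intro p' hp'Fm hcard
      rcases eq_or_ne (p' : Pt N) (q : Pt N) with hpq | hpq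
      · have : p' = q := Subtype.ext hpq
        rw [this]
      · exfalso
        have hp'Tm : (p' : Pt N) ∈ Tm := vertex_mem_finset (IsVertexOf.restrict p'.2 hp'Fm hFmQ)
        have hlt : m (p' : Pt N) < m (q : Pt N) := hm _ hp'Tm hpq
        have : (q : Pt N) ∈ Tm.filter (fun s => m (p' : Pt N) < m s) :=
          Finset.mem_filter.mpr ⟨hqTm, hlt⟩
        have := Finset.card_pos.mpr ⟨_, this⟩
        omega
    | succ k ih =>
      intro p' hp'Fm hcard
      rcases eq_or_ne (p' : Pt N) (q : Pt N) with hpq | hpq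
      · have : p' = q := Subtype.ext hpq
        rw [this]
      · have hp'v : IsVertexOf (convexHull ℝ (Tm : Set (Pt N))) (p' : Pt N) :=
          IsVertexOf.restrict p'.2 hp'Fm hFmQ
        have hp'Tm : (p' : Pt N) ∈ Tm := vertex_mem_finset hp'v
        have hex : ∃ s ∈ Tm, m (p' : Pt N) < m s := ⟨q, hqTm, hm _ hp'Tm hpq⟩
        obtain ⟨ε, w, hεface, hpε, hwε, hwvert, hmw⟩ :=
          climb Tm.card Tm le_rfl m (p' : Pt N) hp'v hex
        have hεQ : IsKFaceOf 1 Q' ε := ⟨isExposed_trans hFmexp hεface.1, hεface.2⟩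
        have hεsub : ε ⊆ convexHull ℝ (Tm : Set (Pt N)) := IsExposed.subset hεface.1
        have hεne : ε ≠ e := fun hεe => hnsub (hεe ▸ hεsub)
        have hwQ : IsVertexOf Q' w :=
          isVertexOf_of_exposed_singleton (isExposed_trans hFmexp hwvert.1)
        have hpw : (p' : Pt N) ≠ w := fun h => absurd (h ▸ hmw) (lt_irrefl _)
        have hadjpw : G.Adj p' ⟨w, hwQ⟩ := hadj p' ⟨w, hwQ⟩ hpw ⟨ε, hεQ, hεne, hpε, hwε⟩
        have hwTm : w ∈ Tm := vertex_mem_finset hwvert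
        have hwFm : w ∈ convexHull ℝ (Tm : Set (Pt N)) := hεsub hwε
        have hcard' : (Tm.filter (fun s => m w < m s)).card ≤ k := by
          have hssub : Tm.filter (fun s => m w < m s) ⊂ Tm.filter (fun s => m (p' : Pt N) < m s) := by
            rw [Finset.ssubset_iff_subset_ne]
            constructor
            · intro s hs
              obtain ⟨hsS, hls⟩ := Finset.mem_filter.1 hs
              exact Finset.mem_filter.mpr ⟨hsS, lt_trans hmw hls⟩
            · intro hEq
              have hw1 : w ∈ Tm.filter (fun s => m (p' : Pt N) < m s) :=
                Finset.mem_filter.mpr ⟨hwTm, hmw⟩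
              rw [← hEq] at hw1
              have := (Finset.mem_filter.1 hw1).2
              exact absurd this (lt_irrefl _)
          have := Finset.card_lt_card hssub
          omega
        exact hadjpw.reachable.trans (ih ⟨w, hwQ⟩ hwFm hcard')
  -- finish
  rw [SimpleGraph.connected_iff]
  constructor
  · intro x y
    obtain ⟨p, hpFm, hxp⟩ := reach _ x le_rfl
    obtain ⟨q, hqFm, hyq⟩ := reach _ y le_rfl
    exact (hxp.trans (connFm p q hpFm hqFm)).trans hyq.symm
  · exact ⟨⟨b₀, hb₀Q⟩⟩
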